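/- Let P_ℓ denote the Legendre polynomials, defined by Rodrigues' formula P_ℓ(s) = (1/(2^ℓ·ℓ!))·(d/ds)^ℓ[ (s²−1)^ℓ ]. Then for every s ∈ (−1,1), the series Σ_{ℓ=0}^∞ P_ℓ(s) converges and its sum equals 1/√(2 − 2s). -/

import Mathlib

set_option maxHeartbeats 1000000

/-- The Legendre polynomial `P_ℓ`, defined by Rodrigues' formula
`P_ℓ(s) = (1/(2^ℓ ℓ!)) (d/ds)^ℓ [(s²−1)^ℓ]`. -/
noncomputable def legendreP (ℓ : ℕ) (s : ℝ) : ℝ :=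
  (1 / (2 ^ ℓ * (Nat.factorial ℓ : ℝ))) * iteratedDeriv ℓ (fun x : ℝ => (x ^ 2 - 1) ^ ℓ) s

open Polynomial Finset in
lemma legendreP_eq_sum (ℓ : ℕ) (s : ℝ) :
    legendreP ℓ s = ∑ k ∈ range (ℓ+1),
      (ℓ.choose k : ℝ)^2 * ((s-1)/2)^k * ((s+1)/2)^(ℓ-k) := by
  have hiter : ∀ (p : ℝ[X]) (n : ℕ),
      iteratedDeriv n (fun x => p.eval x) = fun x => (derivative^[n] p).eval x := by
    intro p n
    induction n with
    | zero => simp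
    | succ n ih =>
      rw [iteratedDeriv_succ, ih, Function.iterate_succ_apply']
      funext x
      simp [Polynomial.deriv]
  have hpoly : (fun x : ℝ => (x ^ 2 - 1) ^ ℓ)
      = fun x => (((X - C 1)^ℓ * (X + C 1)^ℓ : ℝ[X])).eval x := by
    funext x; simp [← mul_pow]; ring
  have key : iteratedDeriv ℓ (fun x : ℝ => (x ^ 2 - 1) ^ ℓ) s
      = (derivative^[ℓ] ((X - C 1)^ℓ * (X + C 1)^ℓ : ℝ[X])).eval s := by
    rw [hpoly, hiter]
  rw [legendreP, key, Polynomial.iterate_derivative_mul, Polynomial.eval_finset_sum,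
    Finset.mul_sum]
  rw [Nat.succ_eq_add_one]
  refine Finset.sum_congr rfl fun k hk => ?_
  have hk' : k ≤ ℓ := Nat.lt_succ_iff.mp (Finset.mem_range.mp hk)
  rw [Polynomial.iterate_derivative_X_sub_pow, Polynomial.iterate_derivative_X_add_pow,
    Nat.sub_sub_self hk']
  simp only [smul_eq_mul, nsmul_eq_mul, eval_mul, eval_natCast, eval_pow, eval_sub, eval_add,
    eval_X, eval_one, eval_smul, eval_C]
  rw [Nat.descFactorial_eq_factorial_mul_choose, Nat.descFactorial_eq_factorial_mul_choose,
    Nat.choose_symm hk']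
  have hfact : ((ℓ.choose k : ℝ)) * (k.factorial : ℝ) * ((ℓ - k).factorial : ℝ)
      = (ℓ.factorial : ℝ) := by
    exact_mod_cast congrArg (Nat.cast (R := ℝ)) (Nat.choose_mul_factorial_mul_factorial hk')
  have h2 : (2:ℝ)^ℓ = 2^k * 2^(ℓ-k) := by rw [← pow_add, Nat.add_sub_cancel' hk']
  have hne : (ℓ.factorial : ℝ) ≠ 0 := Nat.cast_ne_zero.mpr ℓ.factorial_ne_zero
  field_simp [h2]
  push_cast
  rw [div_pow, div_pow, h2]
  field_simp
  linear_combination (ℓ.choose k:ℝ)^2 * (s-1)^k * (s+1)^(ℓ-k) * hfact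

lemma algebra1 (p r A B c2 s2 : ℝ) (hp : 0 < p) (hr0 : 0 < r)
    (hD : 0 < A + p*r + B*c2) (hden : 0 < A + B*c2)
    (hABC : A^2 = B^2 + (p*r)^2) (hsc : s2^2 = 1 - c2^2) :
    p / (A + B*c2)
      = 1/r * (1 - 1/(1+(B*s2/(A+p*r+B*c2))^2)
          * ((B*(c2*2)*(A+p*r+B*c2) - B*s2*(B*(-s2*2)))/(A+p*r+B*c2)^2)) := by
  have hDne : (A+p*r+B*c2) ≠ 0 := ne_of_gt hD
  have hE0 : 0 < (A+p*r)^2 + B^2 + 2*(A+p*r)*B*c2 := by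
    have hED : (A+p*r)^2 + B^2 + 2*(A+p*r)*B*c2 = (A+p*r+B*c2)^2 + B^2*s2^2 := by
      linear_combination (-B^2) * hsc
    rw [hED]; positivity
  have hEne := ne_of_gt hE0
  have e1 : 1/(1+(B*s2/(A+p*r+B*c2))^2)
        * ((B*(c2*2)*(A+p*r+B*c2) - B*s2*(B*(-s2*2)))/(A+p*r+B*c2)^2)
      = (2*B*c2*(A+p*r+B*c2) + 2*B^2*s2^2) / ((A+p*r+B*c2)^2 + B^2*s2^2) := by
    have h2 : (0:ℝ) < (A+p*r+B*c2)^2 + B^2*s2^2 := by positivity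
    field_simp
    ring
  rw [e1]
  have e2 : 2*B*c2*(A+p*r+B*c2) + 2*B^2*s2^2 = 2*B*((A+p*r)*c2+B) := by
    linear_combination 2*B^2 * hsc
  have e2' : (A+p*r+B*c2)^2 + B^2*s2^2 = (A+p*r)^2 + B^2 + 2*(A+p*r)*B*c2 := by
    linear_combination B^2 * hsc
  rw [e2, e2']
  have e3 : 1 - 2*B*((A+p*r)*c2+B)/((A+p*r)^2 + B^2 + 2*(A+p*r)*B*c2)
      = ((A+p*r)^2 - B^2)/((A+p*r)^2 + B^2 + 2*(A+p*r)*B*c2) := by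
    rw [one_sub_div hEne]; congr 1; ring
  rw [e3]
  have hpne := ne_of_gt hp
  have hrne := ne_of_gt hr0
  have hdenne := ne_of_gt hden
  field_simp
  rw [eq_div_iff (by convert hEne using 1; ring)]
  linear_combination (-(p*r) - (A+B*c2)) * hABC

open Real intervalIntegral in
lemma integral_eval (p d : ℝ) (hp : 0 < p) :
    ∫ φ in (0:ℝ)..(2*π), p / (p^2 + d^2 * Real.cos φ ^ 2)
      = 2*π / Real.sqrt (p^2 + d^2) := by
  have hr2 : Real.sqrt (p^2+d^2)^2 = p^2 + d^2 := Real.sq_sqrt (by positivity)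
  have hr0 : 0 < Real.sqrt (p^2+d^2) := Real.sqrt_pos.mpr (by positivity)
  obtain ⟨r, hrdef, hr2, hr0⟩ : ∃ r : ℝ, Real.sqrt (p^2+d^2) = r ∧ r^2 = p^2+d^2 ∧ 0 < r :=
    ⟨_, rfl, hr2, hr0⟩
  rw [hrdef]
  set A := p^2 + d^2/2 with hA
  set B := d^2/2 with hB
  have hABC : A^2 = B^2 + (p*r)^2 := by
    rw [hA, hB, mul_pow, hr2]; ring
  have hDpos : ∀ x : ℝ, 0 < A + p*r + B * x → True := fun _ _ => trivial
  have hD : ∀ φ : ℝ, 0 < A + p*r + B * Real.cos (2*φ) := by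
    intro φ
    have hB0 : 0 ≤ B := by rw [hB]; positivity
    have hpr : 0 < p*r := by positivity
    nlinarith [Real.neg_one_le_cos (2*φ), hA ▸ (by positivity : (0:ℝ) < p^2 + d^2/2)]
  set H : ℝ → ℝ := fun φ =>
    (1/r) * (φ - Real.arctan (B * Real.sin (2*φ) / (A + p*r + B * Real.cos (2*φ)))) with hH
  have hderiv : ∀ φ : ℝ, HasDerivAt H (p / (p^2 + d^2 * Real.cos φ ^ 2)) φ := by
    intro φ
    have h2φ : HasDerivAt (fun φ : ℝ => 2*φ) 2 φ := by
      simpa using (hasDerivAt_id φ).const_mul 2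
    have hsin : HasDerivAt (fun φ : ℝ => B * Real.sin (2*φ)) (B * (Real.cos (2*φ) * 2)) φ :=
      ((Real.hasDerivAt_sin _).comp φ h2φ).const_mul B
    have hcos : HasDerivAt (fun φ : ℝ => A + p*r + B * Real.cos (2*φ))
        (B * (-Real.sin (2*φ) * 2)) φ :=
      (((Real.hasDerivAt_cos _).comp φ h2φ).const_mul B).const_add (A + p*r)
    have hquot := hsin.div hcos (ne_of_gt (hD φ))
    have harct := hquot.arctan
    have hfull := ((hasDerivAt_id φ).sub harct).const_mul (1/r)
    refine hfull.congr_deriv ?_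
    symm
    have hsc : Real.sin (2*φ)^2 = 1 - Real.cos (2*φ)^2 := by
      nlinarith [Real.sin_sq_add_cos_sq (2*φ)]
    have hden1 : p^2 + d^2 * Real.cos φ^2 = A + B * Real.cos (2*φ) := by
      rw [hA, hB, Real.cos_two_mul]; ring
    have hden1pos : 0 < A + B * Real.cos (2*φ) := by rw [← hden1]; positivity
    rw [hden1]
    exact algebra1 p r A B (Real.cos (2*φ)) (Real.sin (2*φ)) hp hr0 (hD φ) hden1pos hABC hsc
  have hint : IntervalIntegrable (fun φ => p / (p^2 + d^2 * Real.cos φ ^ 2))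
      MeasureTheory.volume 0 (2*π) := by
    apply Continuous.intervalIntegrable
    apply Continuous.div continuous_const
    · fun_prop
    · intro φ; positivity
  have heval := intervalIntegral.integral_eq_sub_of_hasDerivAt (fun φ _ => hderiv φ) hint
  rw [heval, hH]
  have h4 : Real.sin (2*(2*π)) = 0 := by
    have : (2:ℝ)*(2*π) = (4:ℕ)*π := by push_cast; ring
    rw [this, Real.sin_nat_mul_pi]
  simp only [h4, mul_zero, zero_div, Real.arctan_zero, sub_zero, zero_sub, mul_zero, zero_mul]
  rw [Real.sin_zero]
  simp
  ring

open Complex Real Finset intervalIntegral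

lemma ortho (j k : ℕ) :
    (∫ φ : ℝ in (0:ℝ)..(2*π), Complex.exp (I*j*φ) * Complex.exp (-(I*k*φ)))
      = if j = k then (2*π : ℂ) else 0 := by
  have hcomb : ∀ φ : ℝ, Complex.exp (I*j*φ) * Complex.exp (-(I*k*φ))
      = Complex.exp ((I*((j:ℂ)-k)) * φ) := by
    intro φ; rw [← Complex.exp_add]; ring_nf
  simp only [hcomb]
  rcases eq_or_ne j k with h | h
  · subst h
    simp only [sub_self, mul_zero, zero_mul, Complex.exp_zero]
    simp
  · have hc : (I*((j:ℂ)-k)) ≠ 0 := by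
      simp only [ne_eq, mul_eq_zero, Complex.I_ne_zero, false_or, sub_eq_zero]
      exact_mod_cast fun hh => h (Nat.cast_injective hh)
    rw [integral_exp_mul_complex hc, if_neg h]
    have h1 : Complex.exp (I*((j:ℂ)-k) * ((2*π : ℝ):ℂ)) = 1 := by
      have harg : (I*((j:ℂ)-k)) * ((2*π : ℝ):ℂ) = ((j:ℤ)-(k:ℤ)) * (2*(π:ℂ)*I) := by
        push_cast; ring
      rw [harg]
      exact_mod_cast Complex.exp_int_mul_two_pi_mul_I ((j:ℤ)-(k:ℤ))
    rw [h1]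
    simp

lemma laplace_integral_pow (α β : ℝ) (ℓ : ℕ) :
    (∫ φ : ℝ in (0:ℝ)..(2*π),
        (((β:ℂ) + I*α*Complex.exp (I*φ)) * ((β:ℂ) + I*α*Complex.exp (-(I*φ))))^ℓ)
      = 2*π * ∑ k ∈ range (ℓ+1),
          (ℓ.choose k : ℂ)^2 * (-(α:ℂ)^2)^k * ((β:ℂ)^2)^(ℓ-k) := by
  have key : ∀ φ : ℝ, (((β:ℂ) + I*α*Complex.exp (I*φ)) * ((β:ℂ) + I*α*Complex.exp (-(I*φ))))^ℓ
      = ∑ j ∈ range (ℓ+1), ∑ k ∈ range (ℓ+1),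
          (((I*(α:ℂ))^j * (β:ℂ)^(ℓ-j) * (ℓ.choose j : ℂ)) *
           ((I*(α:ℂ))^k * (β:ℂ)^(ℓ-k) * (ℓ.choose k : ℂ))) *
            (Complex.exp (I*j*φ) * Complex.exp (-(I*k*φ))) := by
    intro φ
    rw [mul_pow, add_comm ((β:ℂ)) _, add_comm ((β:ℂ)) _, add_pow, add_pow,
      Finset.sum_mul_sum]
    refine Finset.sum_congr rfl fun j hj => Finset.sum_congr rfl fun k hk => ?_
    have e1 : Complex.exp (I*(j:ℂ)*φ) = (Complex.exp (I*φ))^j := by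
      rw [← Complex.exp_nat_mul]; ring_nf
    have e2 : Complex.exp (-(I*(k:ℂ)*φ)) = (Complex.exp (-(I*φ)))^k := by
      rw [← Complex.exp_nat_mul]; ring_nf
    rw [e1, e2]; ring
  simp only [key]
  have hintk : ∀ (c : ℂ) (j k : ℕ), IntervalIntegrable
      (fun φ : ℝ => c * (Complex.exp (I*j*φ) * Complex.exp (-(I*k*φ))))
      MeasureTheory.volume 0 (2*π) := by
    intro c j k
    apply Continuous.intervalIntegrable
    fun_prop
  rw [intervalIntegral.integral_finset_sum]
  swap
  · intro j hj
    apply Continuous.intervalIntegrable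
    exact continuous_finset_sum _ (fun k hk => by fun_prop)
  have step : ∀ j ∈ range (ℓ+1),
      (∫ φ : ℝ in (0:ℝ)..(2*π), ∑ k ∈ range (ℓ+1),
          (((I*(α:ℂ))^j * (β:ℂ)^(ℓ-j) * (ℓ.choose j : ℂ)) *
           ((I*(α:ℂ))^k * (β:ℂ)^(ℓ-k) * (ℓ.choose k : ℂ))) *
            (Complex.exp (I*j*φ) * Complex.exp (-(I*k*φ))))
      = ((I*(α:ℂ))^j * (β:ℂ)^(ℓ-j) * (ℓ.choose j : ℂ))^2 * (2*π) := by
    intro j hj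
    rw [intervalIntegral.integral_finset_sum (fun k hk => hintk _ j k)]
    have : ∀ k ∈ range (ℓ+1),
        (∫ φ : ℝ in (0:ℝ)..(2*π),
          (((I*(α:ℂ))^j * (β:ℂ)^(ℓ-j) * (ℓ.choose j : ℂ)) *
           ((I*(α:ℂ))^k * (β:ℂ)^(ℓ-k) * (ℓ.choose k : ℂ))) *
            (Complex.exp (I*j*φ) * Complex.exp (-(I*k*φ))))
        = if j = k then (((I*(α:ℂ))^j * (β:ℂ)^(ℓ-j) * (ℓ.choose j : ℂ)) *
           ((I*(α:ℂ))^k * (β:ℂ)^(ℓ-k) * (ℓ.choose k : ℂ))) * (2*π) else 0 := by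
      intro k hk
      rw [intervalIntegral.integral_const_mul, ortho j k]
      split_ifs <;> simp
    rw [Finset.sum_congr rfl this, Finset.sum_ite_eq (range (ℓ+1)) j, if_pos hj]
    ring
  rw [Finset.sum_congr rfl step, Finset.mul_sum]
  refine Finset.sum_congr rfl fun j hj => ?_
  have hI : (I*(α:ℂ))^j * (I*(α:ℂ))^j = (-(α:ℂ)^2)^j := by
    rw [← mul_pow, mul_mul_mul_comm, Complex.I_mul_I]; ring_nf
  have expand : ((I*(α:ℂ))^j * (β:ℂ)^(ℓ-j) * (ℓ.choose j : ℂ))^2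
      = (-(α:ℂ)^2)^j * ((β:ℂ)^(ℓ-j) * (ℓ.choose j : ℂ))^2 := by
    rw [← hI]; ring
  rw [expand]
  push_cast
  ring


/-- For every `s ∈ (−1,1)` the series `Σ_{ℓ≥0} P_ℓ(s)` converges, with sum
`1/√(2 − 2s)` (boundary value `t = 1` of the Legendre generating function). -/
theorem stmt_13 :
    ∀ s ∈ Set.Ioo (-1 : ℝ) 1,
      Filter.Tendsto (fun N => ∑ ℓ ∈ Finset.range N, legendreP ℓ s)
        Filter.atTop (nhds (1 / Real.sqrt (2 - 2 * s))) := by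
  rintro s ⟨hs1, hs2⟩
  have ha : (0:ℝ) < (1-s)/2 := by linarith
  have hb : (0:ℝ) < (1+s)/2 := by linarith
  set α := Real.sqrt ((1-s)/2) with hαdef
  set β := Real.sqrt ((1+s)/2) with hβdef
  have hα2 : α^2 = (1-s)/2 := Real.sq_sqrt ha.le
  have hβ2 : β^2 = (1+s)/2 := Real.sq_sqrt hb.le
  set z : ℝ → ℂ := fun φ => ((β:ℂ) + I*α*Complex.exp (I*φ)) * ((β:ℂ) + I*α*Complex.exp (-(I*φ)))
    with hzdef
  -- the integral representation of legendreP
  have hzP : ∀ ℓ : ℕ, (∫ φ : ℝ in (0:ℝ)..(2*π), (z φ)^ℓ) = 2*π*((legendreP ℓ s : ℝ) : ℂ) := by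
    intro ℓ
    rw [hzdef, laplace_integral_pow α β ℓ]
    congr 1
    rw [legendreP_eq_sum]
    push_cast
    refine Finset.sum_congr rfl fun k hk => ?_
    have h1 : ((s:ℂ)-1)/2 = -((α:ℝ):ℂ)^2 := by
      have : ((α:ℝ)^2 : ℝ) = (1-s)/2 := hα2
      have := congrArg (fun x : ℝ => (x:ℂ)) this
      push_cast at this
      rw [this]; ring
    have h2 : ((s:ℂ)+1)/2 = ((β:ℝ):ℂ)^2 := by
      have := congrArg (fun x : ℝ => (x:ℂ)) hβ2
      push_cast at this
      rw [this]; ring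
    rw [h1, h2]
  -- the trigonometric form of z
  have hz : ∀ φ : ℝ, z φ = (s:ℂ) + ((2*α*β*Real.cos φ : ℝ):ℂ)*I := by
    intro φ
    have e1 : Complex.exp (I*(φ:ℂ)) = (Real.cos φ : ℂ) + (Real.sin φ : ℂ)*I := by
      rw [mul_comm, Complex.exp_mul_I, Complex.ofReal_cos, Complex.ofReal_sin]
    have e2 : Complex.exp (-(I*(φ:ℂ))) = (Real.cos φ : ℂ) - (Real.sin φ : ℂ)*I := by
      have : -(I*(φ:ℂ)) = ((-φ : ℝ):ℂ)*I := by push_cast; ring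
      rw [this, Complex.exp_mul_I, Complex.ofReal_cos, Complex.ofReal_sin]
      push_cast
      simp [Complex.cos_neg, Complex.sin_neg]
      ring
    have trigC : ((Real.sin φ : ℝ):ℂ)^2 + ((Real.cos φ : ℝ):ℂ)^2 = 1 := by
      exact_mod_cast Real.sin_sq_add_cos_sq φ
    have hs' : ((β:ℝ):ℂ)^2 - ((α:ℝ):ℂ)^2 = (s:ℂ) := by
      have : (β^2 - α^2 : ℝ) = s := by rw [hα2, hβ2]; ring
      exact_mod_cast this
    rw [hzdef]
    simp only []
    rw [e1, e2]
    simp only [Complex.ofReal_mul, Complex.ofReal_ofNat]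
    have hI : (I:ℂ)^2 = -1 := Complex.I_sq
    linear_combination hs' - ((α:ℝ):ℂ)^2*trigC
      + (((α:ℝ):ℂ)^2*(((Real.sin φ : ℝ):ℂ)^2 + ((Real.cos φ : ℝ):ℂ)^2)
         - ((α:ℝ):ℂ)^2*((Real.sin φ : ℝ):ℂ)^2*I^2) * hI
  clear hzdef
  -- basic facts about z
  have hd2 : (2*α*β)^2 = 1 - s^2 := by
    have : (2*α*β)^2 = 4*α^2*β^2 := by ring
    rw [this, hα2, hβ2]; ring
  have hre : ∀ φ : ℝ, (z φ).re = s := by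
    intro φ; rw [hz φ]; simp
  have him : ∀ φ : ℝ, (z φ).im = 2*α*β*Real.cos φ := by
    intro φ; rw [hz φ]
    simp only [Complex.add_im, Complex.mul_im, Complex.ofReal_re, Complex.ofReal_im,
      Complex.I_re, Complex.I_im]
    ring
  have hnormSq : ∀ φ : ℝ, Complex.normSq (z φ) = s^2 + (1-s^2)*Real.cos φ^2 := by
    intro φ
    rw [Complex.normSq_apply, hre φ, him φ]
    linear_combination Real.cos φ^2 * hd2
  have habs_le : ∀ φ : ℝ, ‖z φ‖ ≤ 1 := by
    intro φ
    rw [Complex.norm_def]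
    calc Real.sqrt (Complex.normSq (z φ)) ≤ Real.sqrt 1 := by
          apply Real.sqrt_le_sqrt
          rw [hnormSq φ]
          nlinarith [Real.cos_sq_le_one φ, sq_nonneg (Real.cos φ), sq_nonneg s]
      _ = 1 := Real.sqrt_one
  have hz1 : ∀ φ : ℝ, z φ ≠ 1 := by
    intro φ hcontra
    have := hre φ
    rw [hcontra] at this
    simp at this
    linarith
  have hzm1 : ∀ φ : ℝ, z φ - 1 ≠ 0 := fun φ => sub_ne_zero.mpr (hz1 φ)
  have habs_lower : ∀ φ : ℝ, 1 - s ≤ ‖z φ - 1‖ := by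
    intro φ
    have h1 : |(z φ - 1).re| ≤ ‖z φ - 1‖ := Complex.abs_re_le_norm _
    have h2 : |(z φ - 1).re| = 1 - s := by
      rw [Complex.sub_re, hre φ, Complex.one_re, abs_of_nonpos (by linarith)]
      ring
    linarith
  have hzcont : Continuous z := by fun_prop
  -- the partial-sum integrands
  set F : ℕ → ℝ → ℝ := fun N φ => (((z φ)^N - 1)/(z φ - 1)).re with hFdef
  have hGcont : ∀ N : ℕ, Continuous (fun φ => ((z φ)^N - 1)/(z φ - 1)) := by
    intro N
    exact ((hzcont.pow N).sub continuous_const).div (hzcont.sub continuous_const) hzm1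
  have hFcont : ∀ N : ℕ, Continuous (F N) := fun N => Complex.continuous_re.comp (hGcont N)
  -- partial sums as integrals
  have hsum : ∀ N : ℕ, (∑ ℓ ∈ Finset.range N, legendreP ℓ s)
      = (1/(2*π)) * ∫ φ in (0:ℝ)..(2*π), F N φ := by
    intro N
    have hGsum : ∀ φ : ℝ, ((z φ)^N - 1)/(z φ - 1) = ∑ ℓ ∈ range N, z φ^ℓ :=
      fun φ => (geom_sum_eq (hz1 φ) N).symm
    have hGint : (∫ φ : ℝ in (0:ℝ)..(2*π), ((z φ)^N - 1)/(z φ - 1))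
        = 2*π*((∑ ℓ ∈ Finset.range N, legendreP ℓ s : ℝ) : ℂ) := by
      simp only [hGsum]
      rw [intervalIntegral.integral_finset_sum (f := fun ℓ φ => z φ ^ ℓ)
        (fun ℓ _ => ((hzcont.pow ℓ).intervalIntegrable 0 (2*π)))]
      rw [Finset.sum_congr rfl (fun ℓ _ => hzP ℓ), ← Finset.mul_sum]
      congr 1
      push_cast
      rfl
    have hre_int : (∫ φ in (0:ℝ)..(2*π), F N φ)
        = (∫ φ : ℝ in (0:ℝ)..(2*π), ((z φ)^N - 1)/(z φ - 1)).re := by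
      have h := Complex.reCLM.intervalIntegral_comp_comm
        (μ := MeasureTheory.volume) ((hGcont N).intervalIntegrable 0 (2*π))
      simp only [Complex.reCLM_apply] at h
      rw [hFdef]
      exact h
    rw [hre_int, hGint]
    have : (2*(π:ℂ)*((∑ ℓ ∈ Finset.range N, legendreP ℓ s : ℝ):ℂ)).re
        = 2*π*(∑ ℓ ∈ Finset.range N, legendreP ℓ s) := by
      rw [show (2*(π:ℂ)) = ((2*π : ℝ):ℂ) by push_cast; ring, ← Complex.ofReal_mul]
      exact Complex.ofReal_re _
    rw [this]
    field_simp
  -- the dominated convergence step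
  have hp : (0:ℝ) < 1 - s := by linarith
  have hDCT : Filter.Tendsto (fun N => ∫ φ in (0:ℝ)..(2*π), F N φ) Filter.atTop
      (nhds (∫ φ in (0:ℝ)..(2*π), (1-s)/((1-s)^2 + (2*α*β)^2*Real.cos φ^2))) := by
    apply intervalIntegral.tendsto_integral_filter_of_dominated_convergence
      (bound := fun _ => 2/(1-s))
    · exact Filter.Eventually.of_forall fun N => (hFcont N).aestronglyMeasurable
    · apply Filter.Eventually.of_forall
      intro N
      apply MeasureTheory.ae_of_all
      intro φ _
      have h1 : ‖F N φ‖ ≤ ‖((z φ)^N - 1)/(z φ - 1)‖ := by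
        rw [hFdef, Real.norm_eq_abs]
        exact Complex.abs_re_le_norm _
      have h2 : ‖((z φ)^N - 1)/(z φ - 1)‖
          = ‖(z φ)^N - 1‖ / ‖z φ - 1‖ := norm_div _ _
      have h3 : ‖(z φ)^N - 1‖ ≤ 2 := by
        calc ‖(z φ)^N - 1‖ ≤ ‖(z φ)^N‖ + 1 := by
              simpa using norm_sub_le ((z φ)^N) 1
          _ ≤ 2 := by
              rw [norm_pow]
              have := pow_le_one₀ (norm_nonneg (z φ)) (habs_le φ) (n := N)
              linarith
      have h4 := habs_lower φ
      rw [h2] at h1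
      calc ‖F N φ‖ ≤ ‖(z φ)^N - 1‖ / ‖z φ - 1‖ := h1
        _ ≤ 2 / (1-s) := by
            apply div_le_div₀ (by norm_num) h3 hp h4
    · exact intervalIntegrable_const
    · have hcount : {x : ℝ | Real.sin x = 0}.Countable := by
        have hsub : {x : ℝ | Real.sin x = 0} ⊆ Set.range (fun n : ℤ => (n:ℝ)*π) := by
          intro x hx
          rcases Real.sin_eq_zero_iff.mp hx with ⟨n, hn⟩
          exact ⟨n, hn⟩
        exact (Set.countable_range _).mono hsub
      have hae : ∀ᵐ x : ℝ, Real.sin x ≠ 0 := by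
        rw [MeasureTheory.ae_iff]
        simp only [not_not]
        exact hcount.measure_zero _
      filter_upwards [hae] with φ hφ _
      have hsin2 : 0 < Real.sin φ^2 := by positivity
      have hc2 : Real.cos φ^2 < 1 := by
        nlinarith [Real.sin_sq_add_cos_sq φ]
      have habslt : ‖z φ‖ < 1 := by
        rw [Complex.norm_def]
        have h1s : (0:ℝ) < 1 - s^2 := by nlinarith
        have hlt : Real.sqrt (Complex.normSq (z φ)) < Real.sqrt 1 := by
          apply Real.sqrt_lt_sqrt (Complex.normSq_nonneg _)
          rw [hnormSq φ]
          nlinarith [mul_pos h1s (by linarith : (0:ℝ) < 1 - Real.cos φ^2)]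
        simpa using hlt
      have hpow : Filter.Tendsto (fun N => (z φ)^N) Filter.atTop (nhds 0) :=
        tendsto_pow_atTop_nhds_zero_of_norm_lt_one habslt
      have htend : Filter.Tendsto (fun N => ((z φ)^N - 1)/(z φ - 1)) Filter.atTop
          (nhds ((0 - 1)/(z φ - 1))) := (hpow.sub_const 1).div_const _
      have hre_tend := (Complex.continuous_re.tendsto _).comp htend
      have hval : ((0 - 1)/(z φ - 1)).re = (1-s)/((1-s)^2 + (2*α*β)^2*Real.cos φ^2) := by
        have hnsq : Complex.normSq (z φ - 1) = (1-s)^2 + (2*α*β)^2*Real.cos φ^2 := by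
          rw [Complex.normSq_apply, Complex.sub_re, Complex.sub_im, hre φ, him φ,
            Complex.one_re, Complex.one_im]
          ring
        have hstep : (0 - 1)/(z φ - 1) = -((z φ - 1)⁻¹) := by ring
        rw [hstep, Complex.neg_re, Complex.inv_re, hnsq, Complex.sub_re, hre φ,
          Complex.one_re]
        rw [← neg_div]
        ring_nf
      rw [hval] at hre_tend
      exact hre_tend
  -- conclude
  have hfin : (fun N => ∑ ℓ ∈ Finset.range N, legendreP ℓ s)
      = fun N => (1/(2*π)) * ∫ φ in (0:ℝ)..(2*π), F N φ := funext hsum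
  rw [hfin]
  have heval := integral_eval (1-s) (2*α*β) hp
  have h22 : (1-s)^2 + (2*α*β)^2 = 2-2*s := by linear_combination hd2
  rw [h22] at heval
  have := hDCT.const_mul (1/(2*π))
  rw [heval] at this
  convert this using 2
  have hπ : (π:ℝ) ≠ 0 := Real.pi_ne_zero
  have hsq : Real.sqrt (2-2*s) > 0 := Real.sqrt_pos.mpr (by linarith)
  field_simp [mul_comm]
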